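/- Let L₁, L₂ ⊆ ℝ^n be lattices with rank(L₁ ∩ L₂) = rank(L₁). Then L₁ + L₂ = {a + b : a ∈ L₁, b ∈ L₂} is again a lattice (a discrete additive subgroup) of ℝ^n. -/

import Mathlib

open Submodule Module

private lemma lattice_discrete {E : Type*} [NormedAddCommGroup E]
    (L : AddSubgroup E) {ε : ℝ} (hε : 0 < ε)
    (hsep : ∀ x ∈ L, x ≠ 0 → ε ≤ ‖x‖) : DiscreteTopology L := by
  refine discreteTopology_iff_isOpen_singleton_zero.mpr ⟨Metric.ball 0 ε, Metric.isOpen_ball, ?_⟩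
  ext x
  simp only [Set.mem_preimage, mem_ball_zero_iff, Set.mem_singleton_iff]
  constructor
  · intro hx
    by_contra hx0
    have : (x : E) ≠ 0 := fun h => hx0 (Subtype.ext h)
    exact absurd hx (not_lt.mpr (hsep x x.2 this))
  · rintro rfl
    simpa using hε

private lemma lattice_ball_finite {E : Type*} [NormedAddCommGroup E] [NormedSpace ℝ E]
    [FiniteDimensional ℝ E] (L : AddSubgroup E) {ε : ℝ} (hε : 0 < ε)
    (hsep : ∀ x ∈ L, x ≠ 0 → ε ≤ ‖x‖) (r : ℝ) :
    {x : E | x ∈ L ∧ ‖x‖ ≤ r}.Finite := by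
  have hd : DiscreteTopology L := lattice_discrete L hε hsep
  have hd' : DiscreteTopology ((L : Set E) : Set E) := hd
  have hcl : IsClosed (L : Set E) := AddSubgroup.isClosed_of_discrete
  have hfin := Metric.finite_isBounded_inter_isClosed DiscreteTopology.isDiscrete
    (Metric.isBounded_closedBall (x := (0 : E)) (r := r)) hcl
  refine hfin.subset fun x hx => ⟨?_, hx.1⟩
  simpa [Metric.mem_closedBall, dist_zero_right] using hx.2

theorem sum_of_lattices_is_lattice
    (n : ℕ) (L₁ L₂ : AddSubgroup (EuclideanSpace ℝ (Fin n)))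
    (h1 : ∃ ε > 0, ∀ x ∈ L₁, x ≠ 0 → ε ≤ ‖x‖)
    (h2 : ∃ ε > 0, ∀ x ∈ L₂, x ≠ 0 → ε ≤ ‖x‖)
    (hrank : Module.finrank ℝ (Submodule.span ℝ ((L₁ ⊓ L₂ : AddSubgroup (EuclideanSpace ℝ (Fin n))) : Set (EuclideanSpace ℝ (Fin n))))
      = Module.finrank ℝ (Submodule.span ℝ (L₁ : Set (EuclideanSpace ℝ (Fin n))))) :
    ∃ ε > 0, ∀ x ∈ L₁ ⊔ L₂, x ≠ 0 → ε ≤ ‖x‖ := by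
  classical
  obtain ⟨ε₁, hε₁, hsep1⟩ := h1
  obtain ⟨ε₂, hε₂, hsep2⟩ := h2
  set E := EuclideanSpace ℝ (Fin n) with hE
  -- the intersection lattice, as a ℤ-submodule
  set M : Submodule ℤ E := AddSubgroup.toIntSubmodule (L₁ ⊓ L₂) with hM
  have hMcoe : (M : Set E) = ((L₁ ⊓ L₂ : AddSubgroup E) : Set E) := rfl
  -- span of M equals span of L₁
  have hspan_le : span ℝ (M : Set E) ≤ span ℝ (L₁ : Set E) := by
    rw [hMcoe]
    exact span_mono (fun x hx => hx.1)
  have hspan_eq : span ℝ (M : Set E) = span ℝ (L₁ : Set E) :=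
    Submodule.eq_of_le_of_finrank_eq hspan_le hrank
  have hL₁V : ∀ a ∈ L₁, a ∈ span ℝ (M : Set E) := by
    intro a ha
    rw [hspan_eq]
    exact subset_span ha
  -- set up the lattice M' inside V := span ℝ M
  set f := (span ℝ (M : Set E)).subtype with hf
  set M' : Submodule ℤ (span ℝ (M : Set E)) := M.comap (f.restrictScalars ℤ) with hM'
  have h_img : f '' M' = M := by
    rw [← LinearMap.coe_restrictScalars ℤ f, ← Submodule.map_coe (f.restrictScalars ℤ),
      Submodule.map_comap_eq_self]
    exact fun x hx ↦ LinearMap.mem_range.mpr ⟨⟨x, Submodule.subset_span hx⟩, rfl⟩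
  have hdM : DiscreteTopology M := by
    refine lattice_discrete (L₁ ⊓ L₂) hε₂ ?_
    exact fun x hx hx0 => hsep2 x hx.2 hx0
  have hdM' : DiscreteTopology M' := by
    refine DiscreteTopology.preimage_of_continuous_injective (M : Set E) ?_ (injective_subtype _)
    exact LinearMap.continuous_of_finiteDimensional f
  have hZ : IsZLattice ℝ M' := ⟨by
    rw [← (Submodule.map_injective_of_injective (injective_subtype _)).eq_iff, Submodule.map_span,
      Submodule.map_top, range_subtype, h_img]⟩
  have : Module.Finite ℤ M' := ZLattice.module_finite ℝ M'
  have : Module.Free ℤ M' := ZLattice.module_free ℝ M'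
  let b₀ := Module.Free.chooseBasis ℤ M'
  let b := b₀.ofZLatticeBasis ℝ M'
  have hbspan : span ℤ (Set.range b) = M' := b₀.ofZLatticeBasis_span ℝ
  set R : ℝ := ∑ i, ‖b i‖ with hR
  have hR0 : 0 ≤ R := Finset.sum_nonneg fun i _ => norm_nonneg _
  -- cocompactness: every element of L₁ is within R of a point of L₁ ⊓ L₂
  have key : ∀ a ∈ L₁, ∃ c, c ∈ L₁ ∧ c ∈ L₂ ∧ ‖a - c‖ ≤ R := by
    intro a ha
    set x : span ℝ (M : Set E) := ⟨a, hL₁V a ha⟩ with hx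
    set c₀ : span ℝ (M : Set E) := (ZSpan.floor b x : span ℝ (M : Set E)) with hc₀
    have hc₀mem : c₀ ∈ M' := by
      rw [← hbspan]; exact (ZSpan.floor b x).2
    have hc₀M : (c₀ : E) ∈ M := by
      rw [Submodule.mem_comap] at hc₀mem
      exact hc₀mem
    have hcL : (c₀ : E) ∈ L₁ ⊓ L₂ := hc₀M
    refine ⟨(c₀ : E), hcL.1, hcL.2, ?_⟩
    have : a - (c₀ : E) = ((x - c₀ : span ℝ (M : Set E)) : E) := rfl
    rw [this]
    have hnorm : ‖(x - c₀ : span ℝ (M : Set E))‖ ≤ R := by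
      rw [show x - c₀ = ZSpan.fract b x from rfl]
      exact ZSpan.norm_fract_le b x
    exact hnorm
  -- finite sets
  have hS₁ : {y : E | y ∈ L₁ ∧ ‖y‖ ≤ R}.Finite := lattice_ball_finite L₁ hε₁ hsep1 R
  have hS₂ : {y : E | y ∈ L₂ ∧ ‖y‖ ≤ R + 1}.Finite := lattice_ball_finite L₂ hε₂ hsep2 (R + 1)
  have hT : (Set.image2 (· + ·) {y : E | y ∈ L₁ ∧ ‖y‖ ≤ R} {y : E | y ∈ L₂ ∧ ‖y‖ ≤ R + 1}).Finite :=
    hS₁.image2 _ hS₂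
  set T := Set.image2 (· + ·) {y : E | y ∈ L₁ ∧ ‖y‖ ≤ R} {y : E | y ∈ L₂ ∧ ‖y‖ ≤ R + 1} with hTdef
  -- get a positive bound on nonzero elements of T
  obtain ⟨ε', hε', hTsep⟩ : ∃ ε' > 0, ∀ y ∈ T, y ≠ 0 → ε' ≤ ‖y‖ := by
    set s := hT.toFinset.filter (· ≠ (0 : E)) with hs
    rcases s.eq_empty_or_nonempty with hse | hsne
    · refine ⟨1, one_pos, fun y hy hy0 => absurd ?_ (Finset.notMem_empty y)⟩
      rw [← hse, hs, Finset.mem_filter, Set.Finite.mem_toFinset]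
      exact ⟨hy, hy0⟩
    · refine ⟨s.inf' hsne (fun y => ‖y‖), ?_, fun y hy hy0 => ?_⟩
      · exact (Finset.lt_inf'_iff hsne).mpr fun y hy =>
          norm_pos_iff.mpr (Finset.mem_filter.mp hy).2
      · exact Finset.inf'_le _ (by rw [hs, Finset.mem_filter, Set.Finite.mem_toFinset]; exact ⟨hy, hy0⟩)
  refine ⟨min 1 ε', lt_min one_pos hε', fun x hx hx0 => ?_⟩
  rcases le_or_gt 1 ‖x‖ with h | h
  · exact le_trans (min_le_left _ _) h
  · refine le_trans (min_le_right _ _) (hTsep x ?_ hx0)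
    obtain ⟨a, ha, v, hv, rfl⟩ := AddSubgroup.mem_sup.mp hx
    obtain ⟨c, hcL₁, hcL₂, hac⟩ := key a ha
    refine ⟨a - c, ⟨L₁.sub_mem ha hcL₁, hac⟩, c + v, ⟨L₂.add_mem hcL₂ hv, ?_⟩, by show a - c + (c + v) = a + v; abel⟩
    have : c + v = (a + v) - (a - c) := by abel1
    rw [this]
    calc ‖(a + v) - (a - c)‖ ≤ ‖a + v‖ + ‖a - c‖ := norm_sub_le _ _
      _ ≤ R + 1 := by rw [add_comm R 1]; exact add_le_add h.le hac
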